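/- Let a < b be real numbers and t ≥ 3 a real number. If f : ℝ → ℝ is nonnegative and monotone increasing on [a,b], differentiable on [a,b], and satisfies f(x)^{t−2}·f'(x) ≥ (t−2)·f(x)^{t−2}·(x−a)^{t−3} for all x ∈ [a,b], then ∫_a^b f(x)^t dx − (∫_a^b f(x) dx)^{t−1} ≥ f(a)^{t−1} · ∫_a^b f(x) dx. -/

import Mathlib

open Real Set intervalIntegral MeasureTheory

private lemma mono_aux {a b : ℝ} (hab : a ≤ b) (F F' : ℝ → ℝ)
    (hF : ∀ x ∈ Icc a b, HasDerivWithinAt F (F' x) (Icc a b) x)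
    (h0 : ∀ x ∈ Icc a b, 0 ≤ F' x) : F a ≤ F b := by
  have hmono : MonotoneOn F (Icc a b) := by
    apply monotoneOn_of_deriv_nonneg (convex_Icc a b)
      (fun x hx => (hF x hx).continuousWithinAt)
    · intro x hx
      rw [interior_Icc] at hx
      exact ((hF x (Ioo_subset_Icc_self hx)).hasDerivAt
        (Icc_mem_nhds hx.1 hx.2)).differentiableAt.differentiableWithinAt
    · intro x hx
      rw [interior_Icc] at hx
      rw [((hF x (Ioo_subset_Icc_self hx)).hasDerivAt (Icc_mem_nhds hx.1 hx.2)).deriv]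
      exact h0 x (Ioo_subset_Icc_self hx)
  exact hmono (left_mem_Icc.2 hab) (right_mem_Icc.2 hab) hab

private lemma ftc_aux {a b : ℝ} {g : ℝ → ℝ} (hg : ContinuousOn g (Icc a b))
    {x : ℝ} (hx : x ∈ Icc a b) :
    HasDerivWithinAt (fun u => ∫ y in a..u, g y) (g x) (Icc a b) x := by
  haveI : Fact (x ∈ Icc a b) := ⟨hx⟩
  exact intervalIntegral.integral_hasDerivWithinAt_right
    ((hg.mono (Icc_subset_Icc_right hx.2)).intervalIntegrable_of_Icc hx.1)
    ⟨Icc a b, self_mem_nhdsWithin, hg.aestronglyMeasurable measurableSet_Icc⟩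
    (hg x hx)

theorem qi_time_scale_real_thm31
    (a b t : ℝ) (hab : a < b) (ht : 3 ≤ t)
    (f f' : ℝ → ℝ)
    (hnonneg : ∀ x ∈ Set.Icc a b, 0 ≤ f x)
    (hmono : MonotoneOn f (Set.Icc a b))
    (hderiv : ∀ x ∈ Set.Icc a b, HasDerivAt f (f' x) x)
    (hf' : ∀ x ∈ Set.Icc a b,
      (t - 2) * f x ^ (t - 2) * (x - a) ^ (t - 3) ≤ f x ^ (t - 2) * f' x) :
    (∫ x in a..b, f x ^ t) - (∫ x in a..b, f x) ^ (t - 1) ≥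
      f a ^ (t - 1) * ∫ x in a..b, f x := by
  have hab' : a ≤ b := hab.le
  have ht1 : (1:ℝ) ≤ t - 1 := by linarith
  have ht2 : (1:ℝ) ≤ t - 2 := by linarith
  have ht3 : (0:ℝ) ≤ t - 3 := by linarith
  have hcont : ContinuousOn f (Icc a b) := fun x hx =>
    ((hderiv x hx).continuousAt).continuousWithinAt
  set I : ℝ → ℝ := fun x => ∫ u in a..x, f u with hIdef
  have hIderiv : ∀ x ∈ Icc a b, HasDerivWithinAt I (f x) (Icc a b) x :=
    fun x hx => ftc_aux hcont hx
  have hIa : I a = 0 := intervalIntegral.integral_same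
  have hInonneg : ∀ x ∈ Icc a b, 0 ≤ I x := by
    intro x hx
    apply intervalIntegral.integral_nonneg hx.1
    intro u hu; exact hnonneg u ⟨hu.1, hu.2.trans hx.2⟩
  have hIle : ∀ x ∈ Icc a b, I x ≤ f x * (x - a) := by
    intro x hx
    have h1 : I x ≤ ∫ _u in a..x, f x := by
      apply intervalIntegral.integral_mono_on hx.1
      · exact (hcont.mono (Icc_subset_Icc_right hx.2)).intervalIntegrable_of_Icc hx.1
      · exact intervalIntegrable_const
      · intro u hu; exact hmono ⟨hu.1, hu.2.trans hx.2⟩ hx hu.2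
    simpa [mul_comm] using h1
  -- inner function G
  set G : ℝ → ℝ := fun x => f x ^ (t-1) - (t-1) * I x ^ (t-2) - f a ^ (t-1) with hGdef
  set G' : ℝ → ℝ := fun x =>
    (t-1) * f x ^ (t-2) * f' x - (t-1) * ((t-2) * I x ^ (t-3) * f x) with hG'def
  have e1 : t - 1 - 1 = t - 2 := by ring
  have e2 : t - 2 - 1 = t - 3 := by ring
  have hGderiv : ∀ x ∈ Icc a b, HasDerivWithinAt G (G' x) (Icc a b) x := by
    intro x hx
    have h1 : HasDerivWithinAt (fun y => f y ^ (t-1))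
        ((t-1) * f x ^ (t-2) * f' x) (Icc a b) x := by
      have := (Real.hasDerivAt_rpow_const (x := f x) (p := t-1)
        (Or.inr ht1)).comp_hasDerivWithinAt x ((hderiv x hx).hasDerivWithinAt (s := Icc a b))
      rw [e1] at this
      simpa [Function.comp_def, mul_assoc] using this
    have h2 : HasDerivWithinAt (fun y => (t-1) * I y ^ (t-2))
        ((t-1) * ((t-2) * I x ^ (t-3) * f x)) (Icc a b) x := by
      have := ((Real.hasDerivAt_rpow_const (x := I x) (p := t-2)
        (Or.inr ht2)).comp_hasDerivWithinAt x (hIderiv x hx)).const_mul (t-1)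
      rw [e2] at this
      simpa [Function.comp, mul_assoc] using this
    simpa [hGdef, hG'def] using (h1.sub h2).sub_const (f a ^ (t-1))
  have hG'nonneg : ∀ x ∈ Icc a b, 0 ≤ G' x := by
    intro x hx
    have key : I x ^ (t-3) * f x ≤ f x ^ (t-2) * (x - a) ^ (t-3) := by
      rcases eq_or_lt_of_le (hnonneg x hx) with h0 | h0
      · rw [← h0]
        rw [Real.zero_rpow (by linarith : t - 2 ≠ 0)]
        simp
      · have hfx := h0.le
        have hxa : (0:ℝ) ≤ x - a := by linarith [hx.1]
        have hb : I x ^ (t-3) ≤ (f x * (x - a)) ^ (t-3) :=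
          Real.rpow_le_rpow (hInonneg x hx) (hIle x hx) ht3
        have hb2 : (f x * (x - a)) ^ (t-3) = f x ^ (t-3) * (x - a) ^ (t-3) :=
          Real.mul_rpow hfx hxa
        have hsplit : f x ^ (t-2) = f x ^ (t-3) * f x := by
          rw [show t - 2 = (t-3) + 1 by ring, Real.rpow_add_one h0.ne']
        calc I x ^ (t-3) * f x ≤ f x ^ (t-3) * (x - a) ^ (t-3) * f x := by
              apply mul_le_mul_of_nonneg_right _ hfx
              rw [← hb2]; exact hb
          _ = f x ^ (t-2) * (x - a) ^ (t-3) := by rw [hsplit]; ring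
    have h2 : (t-2) * (I x ^ (t-3) * f x) ≤ f x ^ (t-2) * f' x := by
      calc (t-2) * (I x ^ (t-3) * f x) ≤ (t-2) * (f x ^ (t-2) * (x - a) ^ (t-3)) :=
            mul_le_mul_of_nonneg_left key (by linarith)
        _ = (t-2) * f x ^ (t-2) * (x - a) ^ (t-3) := by ring
        _ ≤ f x ^ (t-2) * f' x := hf' x hx
    have hpos : (0:ℝ) ≤ t - 1 := by linarith
    simp only [hG'def]
    nlinarith [mul_le_mul_of_nonneg_left h2 hpos]
  have hGa : G a = 0 := by
    simp [hGdef, hIa, Real.zero_rpow (by linarith : t - 2 ≠ 0)]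
  have hGnonneg : ∀ x ∈ Icc a b, 0 ≤ G x := by
    intro x hx
    have hsub : Icc a x ⊆ Icc a b := Icc_subset_Icc_right hx.2
    have := mono_aux hx.1 G G'
      (fun y hy => (hGderiv y (hsub hy)).mono hsub)
      (fun y hy => hG'nonneg y (hsub hy))
    rw [hGa] at this; exact this
  -- outer function F
  have hcontt : ContinuousOn (fun x => f x ^ t) (Icc a b) :=
    hcont.rpow_const (fun x _ => Or.inr (by linarith : (0:ℝ) ≤ t))
  set F : ℝ → ℝ := fun x => (∫ u in a..x, f u ^ t) - I x ^ (t-1) - f a ^ (t-1) * I x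
    with hFdef
  set F' : ℝ → ℝ := fun x => f x ^ t - (t-1) * I x ^ (t-2) * f x - f a ^ (t-1) * f x
    with hF'def
  have hFderiv : ∀ x ∈ Icc a b, HasDerivWithinAt F (F' x) (Icc a b) x := by
    intro x hx
    have h1 : HasDerivWithinAt (fun u => ∫ y in a..u, f y ^ t) (f x ^ t) (Icc a b) x :=
      ftc_aux hcontt hx
    have h2 : HasDerivWithinAt (fun y => I y ^ (t-1))
        ((t-1) * I x ^ (t-2) * f x) (Icc a b) x := by
      have := (Real.hasDerivAt_rpow_const (x := I x) (p := t-1)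
        (Or.inr ht1)).comp_hasDerivWithinAt x (hIderiv x hx)
      rw [e1] at this
      simpa [Function.comp_def, mul_assoc] using this
    have h3 : HasDerivWithinAt (fun y => f a ^ (t-1) * I y)
        (f a ^ (t-1) * f x) (Icc a b) x := (hIderiv x hx).const_mul _
    simpa [hFdef, hF'def, Pi.sub_def] using (h1.sub h2).sub h3
  have hF'nonneg : ∀ x ∈ Icc a b, 0 ≤ F' x := by
    intro x hx
    have hGx := hGnonneg x hx
    simp only [hF'def]
    rcases eq_or_lt_of_le (hnonneg x hx) with h0 | h0
    · rw [← h0, Real.zero_rpow (by linarith : t ≠ 0)]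
      simp
    · have hsplit : f x ^ t = f x ^ (t-1) * f x := by
        rw [show t = (t-1) + 1 by ring, Real.rpow_add_one h0.ne']
        ring_nf
      rw [hsplit]
      have : 0 ≤ G x * f x := mul_nonneg hGx h0.le
      simp only [hGdef] at this
      nlinarith [this]
  have hFab := mono_aux hab' F F' hFderiv hF'nonneg
  have hFa : F a = 0 := by
    simp [hFdef, hIa, Real.zero_rpow (by linarith : t - 1 ≠ 0)]
  rw [hFa] at hFab
  simp only [hFdef, hIdef] at hFab
  linarith
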